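/- Let k ≥ 2 be an integer. For all integers n ≥ 3k + 5 such that nk is even, there exists a k-regular graph on n vertices that has B_k as a subgraph. -/

import Mathlib

open SimpleGraph

/-- Two edges are adjacent if they are distinct and share a vertex. -/
def EdgesAdj {V : Type*} (e e' : Sym2 V) : Prop :=
  e ≠ e' ∧ ∃ v : V, v ∈ e ∧ v ∈ e'

/-- `ms` of an ordering of a graph, the ordering being given as the list of edges
in increasing label order: the largest `s ∈ {1,…,m}` such that any ordered pair of
adjacent edges `(e,e')` with `ℓ(e) < ℓ(e')` has forward distance at least `s`. -/
noncomputable def msList {V : Type*} (L : List (Sym2 V)) : ℕ :=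
  sSup {s | 1 ≤ s ∧ s ≤ L.length ∧ ∀ i j e e', i < j →
    L[i]? = some e → L[j]? = some e' → EdgesAdj e e' → s ≤ j - i}

/-- `cms` of an ordering of a graph: the largest `s ∈ {1,…,m}` such that every pair of
adjacent edges is at cyclic distance at least `s`. -/
noncomputable def cmsList {V : Type*} (L : List (Sym2 V)) : ℕ :=
  sSup {s | 1 ≤ s ∧ s ≤ L.length ∧ ∀ i j e e', i < j →
    L[i]? = some e → L[j]? = some e' → EdgesAdj e e' →
    s ≤ min (j - i) (L.length - (j - i))}

/-- `L` is an ordering of `G`: it lists every edge of `G` exactly once. -/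
def IsOrdering {V : Type*} (G : SimpleGraph V) (L : List (Sym2 V)) : Prop :=
  L.Nodup ∧ ∀ e, e ∈ L ↔ e ∈ G.edgeSet

/-- Cyclic matching sequenceability of a graph: the maximum of `cmsList` over orderings. -/
noncomputable def cms {V : Type*} (G : SimpleGraph V) : ℕ :=
  sSup {k | ∃ L, IsOrdering G L ∧ cmsList L = k}

/-- Number of edges of a graph. -/
noncomputable def numEdges {V : Type*} (G : SimpleGraph V) : ℕ :=
  Nat.card G.edgeSet

/-- The chromatic index: the least number of colours in a proper edge colouring. -/
noncomputable def chromaticIndex {V : Type*} (G : SimpleGraph V) : ℕ :=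
  sInf {c | ∃ f : G.edgeSet → Fin c, ∀ e e' : G.edgeSet, EdgesAdj e.1 e'.1 → f e ≠ f e'}

/-- The edge set of `G` forms a matching (no two distinct edges share a vertex). -/
def IsMatchingGraph {V : Type*} (G : SimpleGraph V) : Prop :=
  ∀ e ∈ G.edgeSet, ∀ e' ∈ G.edgeSet, ¬ EdgesAdj e e'

/-- `G` is regular of degree `d`. -/
def IsRegularGraph {V : Type*} (G : SimpleGraph V) (d : ℕ) : Prop :=
  ∀ v : V, Nat.card (G.neighborSet v) = d

/-- A finite set of edges of `G` forming a matching. -/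
def IsMatchingSet {V : Type*} (G : SimpleGraph V) (M : Finset (Sym2 V)) : Prop :=
  ↑M ⊆ G.edgeSet ∧ ∀ e ∈ M, ∀ e' ∈ M, ¬ EdgesAdj e e'

/-- The matching number of a graph. -/
noncomputable def matchingNumber {V : Type*} (G : SimpleGraph V) : ℕ :=
  sSup {k | ∃ M : Finset (Sym2 V), IsMatchingSet G M ∧ M.card = k}
/-- Adjacency in the complement of `B_k` for odd `k`: the path `0-1-2` together with the
perfect matching `{3,4}, {5,6}, …, {k, k+1}` on the remaining `k-1` vertices. -/
def compAdjB (a b : ℕ) : Prop :=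
  (min a b = 0 ∧ max a b = 1) ∨ (min a b = 1 ∧ max a b = 2) ∨
  (3 ≤ min a b ∧ Odd (min a b) ∧ max a b = min a b + 1)

/-- The graph `B_k`: for even `k` it is the complete graph on `k+1` vertices; for odd `k`
it is the graph on `k+2` vertices whose complement is the vertex-disjoint union of a path
with 3 vertices and a perfect matching on the remaining `k-1` vertices. -/
def BGraph (k : ℕ) : SimpleGraph (Fin (k + 1 + k % 2)) where
  Adj i j := i ≠ j ∧ (k % 2 = 1 → ¬ compAdjB i.val j.val)
  symm := ⟨by
    rintro i j ⟨hne, h⟩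
    refine ⟨hne.symm, fun hk1 hc => h hk1 ?_⟩
    unfold compAdjB at hc ⊢
    rwa [min_comm, max_comm]⟩
  loopless := ⟨fun i h => h.1 rfl⟩

open Sum
lemma natCard_set_eq_finset_card {V : Type*} {S : Set V} {F : Finset V}
    (h : ∀ x, x ∈ S ↔ x ∈ F) : Nat.card S = F.card := by
  have hS : S = ↑F := Set.ext (by simpa using h)
  rw [hS, Nat.card_coe_set_eq, Set.ncard_coe_finset]

lemma exists_circ_finset (m r : ℕ) [NeZero m] (hm : 2 * r < m) :
    ∃ S : Finset (ZMod m),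
      (∀ z : ZMod m, z ∈ S ↔ z ≠ 0 ∧ (z.val ≤ r ∨ (-z).val ≤ r)) ∧ S.card = 2 * r := by
  classical
  have hval : ∀ d ∈ Finset.Icc 1 r, ((d : ZMod m)).val = d := by
    intro d hd
    rw [Finset.mem_Icc] at hd
    exact ZMod.val_cast_of_lt (by omega)
  have hnz : ∀ d ∈ Finset.Icc 1 r, ((d : ZMod m)) ≠ 0 := by
    intro d hd h0
    have := hval d hd
    rw [h0, ZMod.val_zero] at this
    rw [Finset.mem_Icc] at hd; omega
  have hnval : ∀ d ∈ Finset.Icc 1 r, (-(d : ZMod m)).val = m - d := by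
    intro d hd
    rw [ZMod.neg_val, if_neg (hnz d hd), hval d hd]
  refine ⟨(Finset.Icc 1 r).image (fun d : ℕ => (d : ZMod m)) ∪
      (Finset.Icc 1 r).image (fun d : ℕ => -(d : ZMod m)), ?_, ?_⟩
  · intro z
    simp only [Finset.mem_union, Finset.mem_image]
    constructor
    · rintro (⟨d, hd, rfl⟩ | ⟨d, hd, rfl⟩)
      · refine ⟨hnz d hd, Or.inl ?_⟩
        rw [hval d hd]; rw [Finset.mem_Icc] at hd; omega
      · refine ⟨?_, Or.inr ?_⟩
        · intro h0
          apply hnz d hd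
          rwa [neg_eq_zero] at h0
        · rw [neg_neg, hval d hd]; rw [Finset.mem_Icc] at hd; omega
    · rintro ⟨h0, h1 | h1⟩
      · refine Or.inl ⟨z.val, ?_, ZMod.natCast_zmod_val z⟩
        rw [Finset.mem_Icc]
        have := (ZMod.val_eq_zero z).not.mpr h0
        omega
      · refine Or.inr ⟨(-z).val, ?_, by rw [ZMod.natCast_zmod_val, neg_neg]⟩
        rw [Finset.mem_Icc]
        have h0' : (-z) ≠ 0 := by simpa [neg_eq_zero] using h0
        have := (ZMod.val_eq_zero (-z)).not.mpr h0'
        omega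
  · rw [Finset.card_union_of_disjoint, Finset.card_image_of_injOn,
      Finset.card_image_of_injOn, Nat.card_Icc]
    · omega
    · intro a ha b hb hab
      simp only at hab
      rw [Finset.mem_coe] at ha hb
      have h2 : (-(a : ZMod m)).val = (-(b : ZMod m)).val := by rw [hab]
      rw [hnval a ha, hnval b hb] at h2
      rw [Finset.mem_Icc] at ha hb; omega
    · intro a ha b hb hab
      simp only at hab
      rw [Finset.mem_coe] at ha hb
      rw [← hval a ha, ← hval b hb, hab]
    · rw [Finset.disjoint_left]
      rintro z hz1 hz2
      simp only [Finset.mem_image] at hz1 hz2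
      obtain ⟨a, ha, rfl⟩ := hz1
      obtain ⟨b, hb, hab⟩ := hz2
      have h1 := hval a ha
      have h2 : (-(b:ZMod m)).val = m - b := hnval b hb
      rw [hab] at h2
      rw [Finset.mem_Icc] at ha hb; omega


lemma graph_transfer {V : Type*} (H : SimpleGraph V) {n k : ℕ} (e : V ≃ Fin n)
    (hreg : ∀ v, Nat.card (H.neighborSet v) = k) :
    ∃ G : SimpleGraph (Fin n), IsRegularGraph G k ∧ ∀ a b, H.Adj a b → G.Adj (e a) (e b) := by
  refine ⟨⟨fun a b => H.Adj (e.symm a) (e.symm b), ⟨fun a b h => h.symm⟩,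
    ⟨fun a h => H.loopless.irrefl _ h⟩⟩, ?_, ?_⟩
  · intro v
    have heq : _root_.Nat.card _ = Nat.card (H.neighborSet (e.symm v)) :=
      Nat.card_congr (Equiv.subtypeEquiv e.symm (fun x => Iff.rfl))
    exact heq.trans (hreg _)
  · intro a b h
    show H.Adj (e.symm (e a)) (e.symm (e b))
    simpa using h

open Sum
def evenAdj (k m : ℕ) : Fin (k+1) ⊕ ZMod m → Fin (k+1) ⊕ ZMod m → Prop
  | inl i, inl j => i ≠ j
  | inl _, inr _ => False
  | inr _, inl _ => False
  | inr x, inr y => x - y ≠ 0 ∧ ((x - y).val ≤ k/2 ∨ (y - x).val ≤ k/2)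

lemma even_case (k m : ℕ) (hk : 2 ≤ k) (hke : k % 2 = 0) (hm : 2 * k + 4 ≤ m) :
    ∃ H : SimpleGraph (Fin (k+1) ⊕ ZMod m),
      (∀ v, Nat.card (H.neighborSet v) = k) ∧
      ∀ i j : Fin (k+1), i ≠ j → H.Adj (inl i) (inl j) := by
  classical
  haveI : NeZero m := ⟨by omega⟩
  obtain ⟨S, hSmem, hScard⟩ := exists_circ_finset m (k/2) (by omega)
  refine ⟨⟨evenAdj k m, ⟨?_⟩, ⟨?_⟩⟩, ?_, fun i j h => h⟩
  · rintro (i | x) (j | y) h <;> simp only [evenAdj] at h ⊢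
    · exact h.symm
    · exact ⟨fun h0 => h.1 (by rw [← neg_sub, h0, neg_zero]), h.2.symm⟩
  · rintro (i | x) h <;> simp only [evenAdj] at h
    · exact h rfl
    · exact h.1 (by rw [sub_self])
  · rintro (i | x)
    · refine (natCard_set_eq_finset_card
        (F := (Finset.univ.erase i).map ⟨inl, inl_injective⟩) ?_).trans ?_
      · rintro (j | y)
        · show (i ≠ j) ↔ _
          simp [eq_comm, Ne]
        · show False ↔ _
          simp
      · rw [Finset.card_map, Finset.card_erase_of_mem (Finset.mem_univ i),
          Finset.card_univ, Fintype.card_fin]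
        omega
    · refine (natCard_set_eq_finset_card
        (F := (S.image (fun z => x - z)).map ⟨inr, inr_injective⟩) ?_).trans ?_
      · rintro (j | y)
        · show False ↔ _
          simp
        · show (x - y ≠ 0 ∧ ((x - y).val ≤ k/2 ∨ (y - x).val ≤ k/2)) ↔ _
          rw [← neg_sub x y, ← hSmem]
          simp only [Finset.mem_map, Finset.mem_image, Function.Embedding.coeFn_mk]
          constructor
          · intro hs
            exact ⟨y, ⟨x - y, hs, by ring⟩, rfl⟩
          · rintro ⟨y', ⟨z, hz, rfl⟩, hy⟩
            obtain rfl : x - z = y := by simpa using hy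
            simpa using hz
      · rw [Finset.card_map, Finset.card_image_of_injective _ sub_right_injective, hScard]
        omega

open Sum
def zpartner (m h : ℕ) (x : ZMod m) : ZMod m :=
  if x.val ≤ h then ((x.val + h : ℕ) : ZMod m) else ((x.val - h : ℕ) : ZMod m)

lemma zpartner_val (m h : ℕ) [NeZero m] (hm : m = 2*h+1) (x : ZMod m) :
    (zpartner m h x).val = if x.val ≤ h then x.val + h else x.val - h := by
  have hv := ZMod.val_lt x
  unfold zpartner
  split <;> rw [ZMod.val_cast_of_lt (by omega)]

lemma zpartner_sub (m h : ℕ) [NeZero m] (hm : m = 2*h+1) (x : ZMod m) :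
    x - zpartner m h x = if x.val ≤ h then -(h : ZMod m) else (h : ZMod m) := by
  have hv := ZMod.val_lt x
  unfold zpartner
  split
  · rw [Nat.cast_add, ZMod.natCast_zmod_val]; ring
  · rw [Nat.cast_sub (by omega), ZMod.natCast_zmod_val]; ring

def oddAdj (k m h r : ℕ) : Fin (k+2) ⊕ ZMod m → Fin (k+2) ⊕ ZMod m → Prop
  | inl i, inl j => i ≠ j ∧ ¬ compAdjB i.val j.val
  | inl i, inr x => i.val = 1 ∧ x = 0
  | inr x, inl i => i.val = 1 ∧ x = 0
  | inr x, inr y => (x - y ≠ 0 ∧ ((x - y).val ≤ r ∨ (y - x).val ≤ r)) ∨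
      (x ≠ 0 ∧ y ≠ 0 ∧ (y = zpartner m h x ∨ x = zpartner m h y))

lemma odd_case (k m : ℕ) (hk : 3 ≤ k) (hko : k % 2 = 1) (hm : 2 * k + 3 ≤ m)
    (hmo : m % 2 = 1) :
    ∃ H : SimpleGraph (Fin (k+2) ⊕ ZMod m),
      (∀ v, Nat.card (H.neighborSet v) = k) ∧
      ∀ i j : Fin (k+2), i ≠ j → ¬ compAdjB i.val j.val → H.Adj (inl i) (inl j) := by
  classical
  haveI : NeZero m := ⟨by omega⟩
  set r := (k-1)/2 with hrdef
  set h := (m-1)/2 with hhdef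
  have hm2 : m = 2*h+1 := by omega
  have hr2 : 2*r = k - 1 := by omega
  have hrh : r + 1 ≤ h ∧ k + 1 ≤ h := by constructor <;> omega
  obtain ⟨S, hSmem, hScard⟩ := exists_circ_finset m r (by omega)
  -- partner facts
  have hpval := zpartner_val m h hm2
  have hpsub := zpartner_sub m h hm2
  have hhval : ((h : ℕ) : ZMod m).val = h := ZMod.val_cast_of_lt (by omega)
  have hhnz : ((h : ℕ) : ZMod m) ≠ 0 := by
    intro h0; rw [h0, ZMod.val_zero] at hhval; omega
  have hnegh : (-((h : ℕ) : ZMod m)).val = h + 1 := by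
    rw [ZMod.neg_val, if_neg hhnz, hhval]; omega
  have hvne : ∀ x : ZMod m, x ≠ 0 → x.val ≠ 0 := fun x hx => (ZMod.val_eq_zero x).not.mpr hx
  have hp0 : ∀ x : ZMod m, x ≠ 0 → zpartner m h x ≠ 0 := by
    intro x hx h0
    have h1 := hpval x
    rw [h0, ZMod.val_zero] at h1
    have h2 := hvne x hx
    have h3 := ZMod.val_lt x
    split_ifs at h1 <;> omega
  have hpnex : ∀ x : ZMod m, x ≠ 0 → zpartner m h x ≠ x := by
    intro x hx heq
    have h1 := congrArg ZMod.val heq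
    rw [hpval x] at h1
    have h2 := hvne x hx
    have h3 := ZMod.val_lt x
    split_ifs at h1 <;> omega
  have hpinv : ∀ x : ZMod m, x ≠ 0 → zpartner m h (zpartner m h x) = x := by
    intro x hx
    apply ZMod.val_injective
    rw [hpval, hpval]
    have h2 := hvne x hx
    have h3 := ZMod.val_lt x
    split_ifs <;> omega
  have hvals : ∀ x : ZMod m, ((x - zpartner m h x).val = h + 1 ∧ (zpartner m h x - x).val = h) ∨
      ((x - zpartner m h x).val = h ∧ (zpartner m h x - x).val = h + 1) := by
    intro x
    rcases le_or_gt x.val h with hc | hc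
    · left
      have hA : x - zpartner m h x = -((h : ℕ) : ZMod m) := by rw [hpsub x]; exact if_pos hc
      have hB : zpartner m h x - x = ((h : ℕ) : ZMod m) := by
        rw [← neg_sub x, hA, neg_neg]
      rw [hA, hB, hhval, hnegh]
      exact ⟨rfl, rfl⟩
    · right
      have hA : x - zpartner m h x = ((h : ℕ) : ZMod m) := by
        rw [hpsub x]; exact if_neg (by omega)
      have hB : zpartner m h x - x = -((h : ℕ) : ZMod m) := by
        rw [← neg_sub x, hA]
      rw [hA, hB, hhval, hnegh]
      exact ⟨rfl, rfl⟩
  -- circulant membership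
  have hcirc : ∀ x y : ZMod m,
      (x - y ≠ 0 ∧ ((x - y).val ≤ r ∨ (y - x).val ≤ r)) ↔ x - y ∈ S := by
    intro x y
    rw [hSmem, ← neg_sub x y]
  -- partner is not a circulant neighbour
  have hpnc : ∀ x : ZMod m, x - zpartner m h x ∉ S := by
    intro x hmem
    rw [hSmem] at hmem
    obtain ⟨-, hle⟩ := hmem
    rw [neg_sub] at hle
    rcases hvals x with ⟨ha, hb⟩ | ⟨ha, hb⟩ <;> rcases hle with hle | hle <;> omega
  have himg : ∀ x y : ZMod m, (y ∈ S.image (fun z => x - z)) ↔ x - y ∈ S := by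
    intro x y
    simp only [Finset.mem_image]
    constructor
    · rintro ⟨z, hz, rfl⟩; simpa using hz
    · intro hs; exact ⟨x - y, hs, by ring⟩
  have hinr : ∀ (T : Finset (ZMod m)) (y : ZMod m),
      (inr y : Fin (k+2) ⊕ ZMod m) ∈ T.map ⟨inr, inr_injective⟩ ↔ y ∈ T := by
    intro T y; simp
  refine ⟨⟨oddAdj k m h r, ⟨?_⟩, ⟨?_⟩⟩, ?_, fun i j h1 h2 => ⟨h1, h2⟩⟩
  · -- symmetric
    rintro (i | x) (j | y) hadj <;> simp only [oddAdj] at hadj ⊢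
    · refine ⟨hadj.1.symm, fun hc => hadj.2 ?_⟩
      unfold compAdjB at hc ⊢
      rwa [min_comm, max_comm]
    · exact hadj
    · exact hadj
    · rcases hadj with ⟨h0, hle⟩ | ⟨hx, hy, hp⟩
      · exact Or.inl ⟨fun hc => h0 (by rw [← neg_sub, hc, neg_zero]), hle.symm⟩
      · exact Or.inr ⟨hy, hx, hp.symm⟩
  · -- loopless
    rintro (i | x) hadj <;> simp only [oddAdj] at hadj
    · exact hadj.1 rfl
    · rcases hadj with ⟨h0, -⟩ | ⟨hx, -, hp | hp⟩
      · exact h0 (sub_self x)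
      · exact hpnex x hx hp.symm
      · exact hpnex x hx hp.symm
  · -- regularity
    rintro (i | x)
    · -- B part
      have hik := i.isLt
      by_cases h1 : i.val = 1
      · refine (natCard_set_eq_finset_card
          (F := ((Finset.univ \ {(⟨0, by omega⟩ : Fin (k+2)), ⟨1, by omega⟩, ⟨2, by omega⟩}).map
            ⟨inl, inl_injective⟩) ∪ {inr 0}) ?_).trans ?_
        · rintro (j | y)
          · have hjk := j.isLt
            show (i ≠ j ∧ ¬ compAdjB i.val j.val) ↔ _
            simp only [Finset.mem_union, Finset.mem_map, Finset.mem_sdiff, Finset.mem_univ,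
              Finset.mem_insert, Finset.mem_singleton, Function.Embedding.coeFn_mk, true_and,
              Sum.inl.injEq, exists_eq_right, reduceCtorEq, or_false]
            simp only [compAdjB, Nat.odd_iff, Fin.ext_iff, ne_eq, Nat.min_def, Nat.max_def]
            split_ifs <;> omega
          · show (i.val = 1 ∧ y = 0) ↔ _
            simp [h1]
        · rw [Finset.card_union_of_disjoint (by simp), Finset.card_map,
            Finset.card_sdiff_of_subset (Finset.subset_univ _), Finset.card_univ, Fintype.card_fin,
            Finset.card_insert_of_notMem (by simp only [Finset.mem_singleton, Finset.mem_insert, Fin.ext_iff]; push_neg; omega),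
            Finset.card_insert_of_notMem (by simp only [Finset.mem_singleton, Fin.ext_iff]; omega), Finset.card_singleton]
          simp only [Finset.card_singleton]; omega
      · have hFmem : ∀ (w : Fin (k+2)), ∀ (y : ZMod m),
            ¬ ((i.val = 1 ∧ y = 0) ↔ inr y ∈ (Finset.univ \ {i, w}).map
              (⟨inl, inl_injective⟩ : Fin (k+2) ↪ Fin (k+2) ⊕ ZMod m)) → False := by
          intro w y hcon
          apply hcon
          constructor
          · rintro ⟨hh, -⟩; omega
          · intro hmem; simp at hmem
        by_cases h02 : i.val = 0 ∨ i.val = 2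
        · refine (natCard_set_eq_finset_card
            (F := (Finset.univ \ {i, ⟨1, by omega⟩}).map ⟨inl, inl_injective⟩) ?_).trans ?_
          · rintro (j | y)
            · have hjk := j.isLt
              show (i ≠ j ∧ ¬ compAdjB i.val j.val) ↔ _
              simp only [Finset.mem_map, Finset.mem_sdiff, Finset.mem_univ, Finset.mem_insert,
                Finset.mem_singleton, Function.Embedding.coeFn_mk, true_and, Sum.inl.injEq,
                exists_eq_right]
              simp only [compAdjB, Nat.odd_iff, Fin.ext_iff, ne_eq, Nat.min_def, Nat.max_def]
              split_ifs <;> omega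
            · show (i.val = 1 ∧ y = 0) ↔ _
              constructor
              · rintro ⟨hh, -⟩; omega
              · intro hmem; simp at hmem
          · rw [Finset.card_map, Finset.card_sdiff_of_subset (Finset.subset_univ _), Finset.card_univ,
              Fintype.card_fin,
              Finset.card_insert_of_notMem (by simp only [Finset.mem_singleton, Finset.mem_insert, Fin.ext_iff]; push_neg; omega),
              Finset.card_singleton]
            omega
        · push_neg at h02
          have h3 : 3 ≤ i.val := by omega
          rcases Nat.even_or_odd i.val with hpar | hpar
          · rw [Nat.even_iff] at hpar
            refine (natCard_set_eq_finset_card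
              (F := (Finset.univ \ {i, ⟨i.val - 1, by omega⟩}).map ⟨inl, inl_injective⟩) ?_).trans ?_
            · rintro (j | y)
              · have hjk := j.isLt
                show (i ≠ j ∧ ¬ compAdjB i.val j.val) ↔ _
                simp only [Finset.mem_map, Finset.mem_sdiff, Finset.mem_univ, Finset.mem_insert,
                  Finset.mem_singleton, Function.Embedding.coeFn_mk, true_and, Sum.inl.injEq,
                  exists_eq_right]
                simp only [compAdjB, Nat.odd_iff, Fin.ext_iff, ne_eq, Nat.min_def, Nat.max_def]
                split_ifs <;> omega
              · show (i.val = 1 ∧ y = 0) ↔ _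
                constructor
                · rintro ⟨hh, -⟩; omega
                · intro hmem; simp at hmem
            · rw [Finset.card_map, Finset.card_sdiff_of_subset (Finset.subset_univ _), Finset.card_univ,
                Fintype.card_fin,
                Finset.card_insert_of_notMem (by simp only [Finset.mem_singleton, Finset.mem_insert, Fin.ext_iff]; push_neg; omega),
                Finset.card_singleton]
              omega
          · rw [Nat.odd_iff] at hpar
            refine (natCard_set_eq_finset_card
              (F := (Finset.univ \ {i, ⟨i.val + 1, by omega⟩}).map ⟨inl, inl_injective⟩) ?_).trans ?_
            · rintro (j | y)
              · have hjk := j.isLt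
                show (i ≠ j ∧ ¬ compAdjB i.val j.val) ↔ _
                simp only [Finset.mem_map, Finset.mem_sdiff, Finset.mem_univ, Finset.mem_insert,
                  Finset.mem_singleton, Function.Embedding.coeFn_mk, true_and, Sum.inl.injEq,
                  exists_eq_right]
                simp only [compAdjB, Nat.odd_iff, Fin.ext_iff, ne_eq, Nat.min_def, Nat.max_def]
                split_ifs <;> omega
              · show (i.val = 1 ∧ y = 0) ↔ _
                constructor
                · rintro ⟨hh, -⟩; omega
                · intro hmem; simp at hmem
            · rw [Finset.card_map, Finset.card_sdiff_of_subset (Finset.subset_univ _), Finset.card_univ,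
                Fintype.card_fin,
                Finset.card_insert_of_notMem (by simp only [Finset.mem_singleton, Finset.mem_insert, Fin.ext_iff]; push_neg; omega),
                Finset.card_singleton]
              omega
    · -- circulant part
      by_cases hx : x = 0
      · subst hx
        refine (natCard_set_eq_finset_card
          (F := ((S.image (fun z => (0 : ZMod m) - z)).map ⟨inr, inr_injective⟩) ∪
            {inl ⟨1, by omega⟩}) ?_).trans ?_
        · rintro (j | y)
          · show (j.val = 1 ∧ (0 : ZMod m) = 0) ↔ _
            simp [Fin.ext_iff]
          · show (((0:ZMod m) - y ≠ 0 ∧ (((0:ZMod m) - y).val ≤ r ∨ (y - (0:ZMod m)).val ≤ r)) ∨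
              ((0:ZMod m) ≠ 0 ∧ y ≠ 0 ∧ (y = zpartner m h (0:ZMod m) ∨ (0:ZMod m) = zpartner m h y))) ↔ _
            rw [hcirc 0 y, Finset.mem_union, hinr, himg 0 y, Finset.mem_singleton]
            constructor
            · rintro (hs | ⟨h0, -⟩)
              · exact Or.inl hs
              · exact absurd rfl h0
            · rintro (hs | hcon)
              · exact Or.inl hs
              · simp at hcon
        · rw [Finset.card_union_of_disjoint (by simp), Finset.card_map,
            Finset.card_image_of_injective _ sub_right_injective, hScard, Finset.card_singleton]
          omega
      · refine (natCard_set_eq_finset_card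
          (F := ((S.image (fun z => x - z)) ∪ {zpartner m h x}).map ⟨inr, inr_injective⟩) ?_).trans ?_
        · rintro (j | y)
          · show (j.val = 1 ∧ x = 0) ↔ _
            constructor
            · rintro ⟨-, h0⟩; exact absurd h0 hx
            · intro hmem; simp at hmem
          · show ((x - y ≠ 0 ∧ ((x - y).val ≤ r ∨ (y - x).val ≤ r)) ∨
              (x ≠ 0 ∧ y ≠ 0 ∧ (y = zpartner m h x ∨ x = zpartner m h y))) ↔ _
            rw [hcirc x y]
            have hMR : (x ≠ 0 ∧ y ≠ 0 ∧ (y = zpartner m h x ∨ x = zpartner m h y)) ↔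
                y = zpartner m h x := by
              constructor
              · rintro ⟨-, hy, hp | hp⟩
                · exact hp
                · rw [hp, hpinv y hy]
              · intro hp
                refine ⟨hx, ?_, Or.inl hp⟩
                rw [hp]
                exact hp0 x hx
            rw [hMR, hinr, Finset.mem_union, himg x y, Finset.mem_singleton]
        · rw [Finset.card_map, Finset.card_union_of_disjoint, Finset.card_image_of_injective _
            sub_right_injective, hScard, Finset.card_singleton]
          · omega
          · rw [Finset.disjoint_singleton_right, himg x (zpartner m h x)]
            exact hpnc x

/-- Theorem: for `k ≥ 2` and any `n ≥ 3k + 5` with `nk` even, there is a `k`-regular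
graph on `n` vertices containing `B_k` as a subgraph. -/
theorem exists_regular_with_BGraph_subgraph (k n : ℕ) (hk : 2 ≤ k)
    (hn : 3 * k + 5 ≤ n) (heven : Even (n * k)) :
    ∃ G : SimpleGraph (Fin n), IsRegularGraph G k ∧
      ∃ f : Fin (k + 1 + k % 2) ↪ Fin n,
        ∀ i j, (BGraph k).Adj i j → G.Adj (f i) (f j) := by
  classical
  rcases Nat.mod_two_eq_zero_or_one k with hk2 | hk2
  · -- k even
    set m := n - (k+1) with hmdef
    haveI : NeZero m := ⟨by omega⟩
    obtain ⟨H, hreg, hadj⟩ := even_case k m hk hk2 (by omega)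
    have hcard : Fintype.card (Fin (k+1) ⊕ ZMod m) = n := by
      rw [Fintype.card_sum, Fintype.card_fin, ZMod.card]
      omega
    set e := Fintype.equivFinOfCardEq hcard with hedef
    obtain ⟨G, hG, hGadj⟩ := graph_transfer H e hreg
    have hKK : k + 1 + k % 2 = k + 1 := by omega
    refine ⟨G, hG, ⟨fun i => e (Sum.inl (Fin.cast hKK i)), ?_⟩, ?_⟩
    · intro a b hab
      have h1 := Sum.inl_injective (e.injective hab)
      exact Fin.cast_injective hKK h1
    · intro i j hadjB
      exact hGadj _ _ (hadj _ _ (fun hEq => (hadjB : i ≠ j ∧ _).1 (Fin.cast_injective hKK hEq)))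
  · -- k odd
    have hk3 : 3 ≤ k := by omega
    have hne : n % 2 = 0 := by
      rcases Nat.even_mul.mp heven with he | he
      · exact Nat.even_iff.mp he
      · have := Nat.even_iff.mp he
        omega
    set m := n - (k+2) with hmdef
    haveI : NeZero m := ⟨by omega⟩
    obtain ⟨H, hreg, hadj⟩ := odd_case k m hk3 hk2 (by omega) (by omega)
    have hcard : Fintype.card (Fin (k+2) ⊕ ZMod m) = n := by
      rw [Fintype.card_sum, Fintype.card_fin, ZMod.card]
      omega
    set e := Fintype.equivFinOfCardEq hcard with hedef
    obtain ⟨G, hG, hGadj⟩ := graph_transfer H e hreg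
    have hKK : k + 1 + k % 2 = k + 2 := by omega
    refine ⟨G, hG, ⟨fun i => e (Sum.inl (Fin.cast hKK i)), ?_⟩, ?_⟩
    · intro a b hab
      have h1 := Sum.inl_injective (e.injective hab)
      exact Fin.cast_injective hKK h1
    · intro i j hadjB
      obtain ⟨hne', himp⟩ := (hadjB : i ≠ j ∧ _)
      exact hGadj _ _ (hadj _ _ (fun hEq => hne' (Fin.cast_injective hKK hEq)) (himp hk2))
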